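/- Let n ≥ 1, let Φ: ℝⁿ × ℝⁿ → ℝ be C², let Ψ: ℝⁿ × ℝ → ℝ be C¹, let ρ: ℝⁿ → ℝ be continuous with ρ > 0, let a: ℝ → ℝ be continuous with a(t) ≥ 0, and let b: ℝ → ℝ be C¹ with b(t) ≥ 0. Let u: ℝ × ℝⁿ → ℝ be C², and suppose there is a compact set K ⊂ ℝⁿ such that ∂ₜu(t,x) = 0 for all x ∉ K and all t (so u(t,·) agrees with a fixed function outside K), and that the functions x ↦ Φ(x, ∇ₓu(t,x)) + Ψ(x, u(t,x)) and x ↦ ρ(x)(∂ₜu(t,x))² are integrable on ℝⁿ for each t, with locally uniform integrable bounds permitting differentiation under the integral sign. If u satisfies the accelerated descent PDE ρ(x)(∂ₜₜu + a(t)∂ₜu) = −b(t)·(∂_zΨ(x, u) − div_x[∇_pΦ(x, ∇ₓu)]) at every (t,x), then setting K[u](t) = ½∫_{ℝⁿ} ρ(x)(∂ₜu(t,x))² dx and E[u](t) = ∫_{ℝⁿ} Φ(x, ∇ₓu(t,x)) + Ψ(x, u(t,x)) dx, the total energy satisfies d/dt (K[u](t) + b(t)·E[u](t)) = −2a(t)·K[u](t)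 + b'(t)·E[u](t) for all t. In particular, if b' ≤ 0 and E[u] ≥ 0, the total energy K[u] + b·E[u] is nonincreasing. -/

import Mathlib

open MeasureTheory

/-- Divergence of a vector field on `ℝⁿ`: the trace of its Fréchet derivative,
computed in the standard orthonormal basis. -/
noncomputable def vecDiv {n : ℕ}
    (V : EuclideanSpace ℝ (Fin n) → EuclideanSpace ℝ (Fin n))
    (x : EuclideanSpace ℝ (Fin n)) : ℝ :=
  ∑ i, fderiv ℝ V x (EuclideanSpace.single i 1) i

/-- The integral over `ℝⁿ⁺¹` of a partial-derivative-sum (divergence) of a compactly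
supported `C¹` vector field vanishes. -/
lemma pi_integral_div_eq_zero {m : ℕ} (V : (Fin (m+1) → ℝ) → (Fin (m+1) → ℝ))
    (hV : ContDiff ℝ 1 V) (hcs : HasCompactSupport V) :
    ∫ x, ∑ i, fderiv ℝ V x (Pi.single i 1) i = 0 := by
  obtain ⟨R, hR⟩ := hcs.isBounded.subset_closedBall 0
  set R' : ℝ := max R 0 + 1 with hR'def
  have hR'pos : 0 < R' := by positivity
  have hsub : tsupport V ⊆ Metric.ball 0 R' := fun x hx => by
    have h1 : dist x 0 ≤ R := Metric.mem_closedBall.1 (hR hx)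
    exact Metric.mem_ball.2 (lt_of_le_of_lt h1 (by simp [hR'def]; nlinarith [le_max_left R (0:ℝ)]))
  set a : Fin (m+1) → ℝ := fun _ => -R' with ha
  set b : Fin (m+1) → ℝ := fun _ => R' with hb
  have hab : a ≤ b := fun i => by simp [ha, hb]; linarith
  have hVz : ∀ x ∉ Metric.ball (0 : Fin (m+1) → ℝ) R', V x = 0 := fun x hx =>
    image_eq_zero_of_notMem_tsupport (fun h => hx (hsub h))
  have hball_sub : Metric.ball (0 : Fin (m+1) → ℝ) R' ⊆ Set.Icc a b := by
    intro x hx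
    rw [Metric.mem_ball, dist_zero_right] at hx
    refine Set.mem_Icc.2 ⟨fun i => ?_, fun i => ?_⟩
    · have := norm_le_pi_norm x i
      simp only [Real.norm_eq_abs] at this
      simp only [ha]; linarith [abs_le.1 (this.trans hx.le) |>.1]
    · have := norm_le_pi_norm x i
      simp only [Real.norm_eq_abs] at this
      simp only [hb]; linarith [abs_le.1 (this.trans hx.le) |>.2]
  have hfz : ∀ x ∉ Set.Icc a b, (∑ i, fderiv ℝ V x (Pi.single i 1) i) = 0 := by
    intro x hx
    have hx' : x ∉ tsupport V := fun h => hx (hball_sub (hsub h))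
    have hev : V =ᶠ[nhds x] (fun _ => 0) := by
      filter_upwards [(isClosed_tsupport V).isOpen_compl.mem_nhds hx'] with y hy
      exact image_eq_zero_of_notMem_tsupport hy
    rw [hev.fderiv_eq, fderiv_fun_const]
    simp
  have hcont : Continuous fun x => ∑ i, fderiv ℝ V x (Pi.single i 1) i := by
    apply continuous_finset_sum
    intro i _
    exact (continuous_apply i).comp
      ((hV.continuous_fderiv one_ne_zero).clm_apply continuous_const)
  have hIi : IntegrableOn (fun x => ∑ i, fderiv ℝ V x (Pi.single i 1) i) (Set.Icc a b) :=
    hcont.continuousOn.integrableOn_compact isCompact_Icc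
  rw [← setIntegral_eq_integral_of_forall_compl_eq_zero hfz]
  rw [integral_divergence_of_hasFDerivAt_off_countable a b hab V (fun x => fderiv ℝ V x)
    ∅ Set.countable_empty hV.continuous.continuousOn
    (fun x _ => (hV.differentiable one_ne_zero x).hasFDerivAt) hIi]
  apply Finset.sum_eq_zero
  intro i _
  have key : ∀ c : ℝ, R' ≤ |c| → ∀ y : Fin m → ℝ, V (i.insertNth c y) i = 0 := by
    intro c hc y
    set pt : Fin (m+1) → ℝ := i.insertNth c y with hpt
    have hpti : pt i = c := by simp [hpt, Fin.insertNth_apply_same]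
    have : V pt = 0 := by
      apply hVz
      rw [Metric.mem_ball, dist_zero_right]
      push_neg
      have h1 : |pt i| ≤ ‖pt‖ := by simpa using norm_le_pi_norm pt i
      rw [hpti] at h1
      linarith
    simp [this]
  have hfront : ∀ y : Fin m → ℝ, V (i.insertNth (b i) y) i = 0 :=
    key (b i) (by simp [hb, abs_of_pos hR'pos])
  have hback : ∀ y : Fin m → ℝ, V (i.insertNth (a i) y) i = 0 :=
    key (a i) (by simp [ha, abs_of_pos hR'pos])
  simp [hfront, hback]

/-- The integral over `ℝⁿ` (`n ≥ 1`) of the divergence of a compactly supported `C¹`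
vector field vanishes. -/
lemma integral_vecDiv_eq_zero {n : ℕ} (hn : 1 ≤ n)
    (V : EuclideanSpace ℝ (Fin n) → EuclideanSpace ℝ (Fin n))
    (hV : ContDiff ℝ 1 V) (hcs : HasCompactSupport V) :
    ∫ x, vecDiv V x = 0 := by
  obtain ⟨m, rfl⟩ : ∃ m, n = m + 1 := ⟨n - 1, (Nat.succ_pred_eq_of_pos hn).symm⟩
  set L : EuclideanSpace ℝ (Fin (m+1)) ≃L[ℝ] (Fin (m+1) → ℝ) :=
    EuclideanSpace.equiv (Fin (m+1)) ℝ with hL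
  set W : (Fin (m+1) → ℝ) → (Fin (m+1) → ℝ) := fun y => L (V (L.symm y)) with hW
  have hWc : ContDiff ℝ 1 W :=
    (L.contDiff.comp hV).comp L.symm.contDiff
  have hWcs : HasCompactSupport W := by
    have h1 : HasCompactSupport fun y => V (L.symm y) :=
      hcs.comp_homeomorph L.symm.toHomeomorph
    exact h1.comp_left (g := fun z => L z) (by simp)
  have hfd : ∀ y, fderiv ℝ W y =
      ((L : EuclideanSpace ℝ (Fin (m+1)) →L[ℝ] (Fin (m+1) → ℝ)).comp
        (fderiv ℝ V (L.symm y))).comp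
        (L.symm : (Fin (m+1) → ℝ) →L[ℝ] EuclideanSpace ℝ (Fin (m+1))) := by
    intro y
    have h1 : HasFDerivAt V (fderiv ℝ V (L.symm y)) (L.symm y) :=
      (hV.differentiable one_ne_zero _).hasFDerivAt
    exact (((L.hasFDerivAt).comp _ (h1.comp _ (L.symm.hasFDerivAt))) :
      HasFDerivAt W _ y).fderiv
  have hpt : ∀ y, vecDiv V (L.symm y) = ∑ i, fderiv ℝ W y (Pi.single i 1) i := by
    intro y
    unfold vecDiv
    apply Finset.sum_congr rfl
    intro i _
    rw [hfd]
    have h1 : (L.symm : (Fin (m+1) → ℝ) →L[ℝ] EuclideanSpace ℝ (Fin (m+1))) (Pi.single i 1)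
        = EuclideanSpace.single i 1 := rfl
    simp only [ContinuousLinearMap.comp_apply, h1]
    rfl
  have hmp := (EuclideanSpace.volume_preserving_symm_measurableEquiv_toLp (Fin (m+1))).symm
  have hint : ∫ x, vecDiv V x
      = ∫ y, vecDiv V ((MeasurableEquiv.toLp 2 (Fin (m+1) → ℝ)).symm.symm y) := by
    rw [← hmp.integral_comp
      (MeasurableEquiv.toLp 2 (Fin (m+1) → ℝ)).symm.symm.measurableEmbedding]
  rw [hint]
  have : ∀ y, vecDiv V ((MeasurableEquiv.toLp 2 (Fin (m+1) → ℝ)).symm.symm y)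
      = ∑ i, fderiv ℝ W y (Pi.single i 1) i := fun y => hpt y
  rw [integral_congr_ae (Filter.Eventually.of_forall this)]
  exact pi_integral_div_eq_zero W hWc hWcs

set_option maxHeartbeats 1000000 in
/-- Energy monotonicity for PDE acceleration: if `u` solves the accelerated descent
equation `ρ(u_tt + a(t)u_t) = −b(t)(Ψ_z(x,u) − div ∇_pΦ(x,∇u))`, with `∂ₜu`
supported in a fixed compact set and with integrability permitting differentiation
under the integral sign, then the total energy `K[u] + b(t)E[u]` (kinetic plus
weighted potential energy) satisfies
`d/dt (K[u] + b E[u]) = −2a(t)K[u] + b'(t)E[u]`; in particular it is nonincreasing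
whenever `b' ≤ 0` and `E[u] ≥ 0`. -/
theorem energy_monotonicity (n : ℕ) (hn : 1 ≤ n)
    (Φ : EuclideanSpace ℝ (Fin n) × EuclideanSpace ℝ (Fin n) → ℝ)
    (Ψ : EuclideanSpace ℝ (Fin n) × ℝ → ℝ)
    (ρ : EuclideanSpace ℝ (Fin n) → ℝ) (a b : ℝ → ℝ)
    (hΦ : ContDiff ℝ 2 Φ) (hΨ : ContDiff ℝ 1 Ψ)
    (hρ : Continuous ρ) (hρpos : ∀ x, 0 < ρ x)
    (ha : Continuous a) (hanonneg : ∀ t, 0 ≤ a t)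
    (hb : ContDiff ℝ 1 b) (hbnonneg : ∀ t, 0 ≤ b t)
    (u : ℝ → EuclideanSpace ℝ (Fin n) → ℝ)
    (hu : ContDiff ℝ 2 (fun p : ℝ × EuclideanSpace ℝ (Fin n) => u p.1 p.2))
    -- `∂ₜu` vanishes outside a fixed compact set (Dirichlet-type condition):
    (hsupp : ∃ K : Set (EuclideanSpace ℝ (Fin n)), IsCompact K ∧
      ∀ x ∉ K, ∀ t, deriv (fun s => u s x) t = 0)
    -- integrability of the potential and kinetic energy densities:
    (hintE : ∀ t, Integrable (fun x => Φ (x, gradient (u t) x) + Ψ (x, u t x)))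
    (hintK : ∀ t, Integrable (fun x => ρ x * (deriv (fun s => u s x) t) ^ 2))
    -- differentiation under the integral sign for both energies:
    (hDUISK : ∀ t, HasDerivAt
      (fun s => ∫ x, ρ x * (deriv (fun τ => u τ x) s) ^ 2)
      (∫ x, deriv (fun s => ρ x * (deriv (fun τ => u τ x) s) ^ 2) t) t)
    (hDUISE : ∀ t, HasDerivAt
      (fun s => ∫ x, Φ (x, gradient (u s) x) + Ψ (x, u s x))
      (∫ x, deriv (fun s => Φ (x, gradient (u s) x) + Ψ (x, u s x)) t) t)
    -- the accelerated descent PDE: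
    (hPDE : ∀ t x,
      ρ x * (deriv (fun s => deriv (fun τ => u τ x) s) t
          + a t * deriv (fun s => u s x) t) =
        -(b t) * (deriv (fun z => Ψ (x, z)) (u t x) -
          vecDiv (fun y => gradient (fun p => Φ (y, p)) (gradient (u t) y)) x)) :
    (∀ t, HasDerivAt
        (fun s => (1 / 2 : ℝ) * (∫ x, ρ x * (deriv (fun τ => u τ x) s) ^ 2) +
          b s * (∫ x, Φ (x, gradient (u s) x) + Ψ (x, u s x)))
        (-2 * a t * ((1 / 2 : ℝ) * (∫ x, ρ x * (deriv (fun τ => u τ x) t) ^ 2)) +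
          deriv b t * (∫ x, Φ (x, gradient (u t) x) + Ψ (x, u t x))) t) ∧
      ((∀ t, deriv b t ≤ 0) →
        (∀ t, 0 ≤ ∫ x, Φ (x, gradient (u t) x) + Ψ (x, u t x)) →
        Antitone (fun t =>
          (1 / 2 : ℝ) * (∫ x, ρ x * (deriv (fun τ => u τ x) t) ^ 2) +
            b t * (∫ x, Φ (x, gradient (u t) x) + Ψ (x, u t x)))) := by
  obtain ⟨K, hK, hKsupp⟩ := hsupp
  -- ## Basic objects
  set U : ℝ × EuclideanSpace ℝ (Fin n) → ℝ := fun p => u p.1 p.2 with hUdef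
  have hu' : ContDiff ℝ 2 U := hu
  have hUd : Differentiable ℝ U := hu'.differentiable two_ne_zero
  have hfdU : ContDiff ℝ 1 (fderiv ℝ U) := hu'.fderiv_right (by norm_num)
  have hcurve : ∀ (t : ℝ) (x : EuclideanSpace ℝ (Fin n)),
      HasDerivAt (fun s => (s, x) : ℝ → ℝ × EuclideanSpace ℝ (Fin n)) (1, 0) t :=
    fun t x => (hasDerivAt_id t).prodMk (hasDerivAt_const t x)
  have hv : ∀ (t : ℝ) (x : EuclideanSpace ℝ (Fin n)),
      HasDerivAt (fun s => u s x) (fderiv ℝ U (t, x) (1, 0)) t := fun t x =>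
    ((hUd (t, x)).hasFDerivAt.comp_hasDerivAt t (hcurve t x) :
      HasDerivAt (U ∘ fun s => (s, x)) _ t)
  have hvdef : ∀ (t : ℝ) x, deriv (fun s => u s x) t = fderiv ℝ U (t, x) (1, 0) :=
    fun t x => (hv t x).deriv
  set V : ℝ × EuclideanSpace ℝ (Fin n) → ℝ := fun p => fderiv ℝ U p (1, 0) with hVdef
  have hVc1 : ContDiff ℝ 1 V := hfdU.clm_apply contDiff_const
  have hw : ∀ (t : ℝ) (x : EuclideanSpace ℝ (Fin n)),
      HasDerivAt (fun s => V (s, x)) (fderiv ℝ (fderiv ℝ U) (t, x) (1, 0) (1, 0)) t := by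
    intro t x
    have h1 : HasDerivAt (fun s => fderiv ℝ U (s, x)) (fderiv ℝ (fderiv ℝ U) (t, x) (1, 0)) t :=
      (hfdU.differentiable one_ne_zero (t, x)).hasFDerivAt.comp_hasDerivAt t (hcurve t x)
    simpa using h1.clm_apply (hasDerivAt_const t ((1:ℝ), (0:EuclideanSpace ℝ (Fin n))))
  -- ## Spatial facts
  have hcurveX : ∀ (t : ℝ) (x : EuclideanSpace ℝ (Fin n)),
      HasFDerivAt (fun y => (t, y) : EuclideanSpace ℝ (Fin n) → ℝ × EuclideanSpace ℝ (Fin n))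
        (ContinuousLinearMap.inr ℝ ℝ (EuclideanSpace ℝ (Fin n))) x := by
    intro t x
    exact HasFDerivAt.prodMk (hasFDerivAt_const (𝕜 := ℝ) t x) (hasFDerivAt_id (𝕜 := ℝ) x)
  have hfds : ∀ (t : ℝ) x, HasFDerivAt (u t)
      ((fderiv ℝ U (t, x)).comp (ContinuousLinearMap.inr ℝ ℝ (EuclideanSpace ℝ (Fin n)))) x :=
    fun t x => (hUd (t, x)).hasFDerivAt.comp x (hcurveX t x)
  have hgradUt : ∀ (t : ℝ) x, gradient (u t) x =
      (InnerProductSpace.toDual ℝ (EuclideanSpace ℝ (Fin n))).symm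
        ((fderiv ℝ U (t, x)).comp (ContinuousLinearMap.inr ℝ ℝ (EuclideanSpace ℝ (Fin n)))) := by
    intro t x
    unfold gradient
    rw [(hfds t x).fderiv]
  -- time derivative of the spatial gradient (Clairaut swap)
  have hgradswap : ∀ (t : ℝ) x,
      HasDerivAt (fun s => gradient (u s) x) (gradient (fun y => V (t, y)) x) t := by
    intro t x
    have hA : HasDerivAt (fun s => fderiv ℝ U (s, x)) (fderiv ℝ (fderiv ℝ U) (t, x) (1, 0)) t :=
      (hfdU.differentiable one_ne_zero (t, x)).hasFDerivAt.comp_hasDerivAt t (hcurve t x)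
    set inr := ContinuousLinearMap.inr ℝ ℝ (EuclideanSpace ℝ (Fin n)) with hinr
    set cmp : ((ℝ × EuclideanSpace ℝ (Fin n)) →L[ℝ] ℝ) →L[ℝ]
        (EuclideanSpace ℝ (Fin n) →L[ℝ] ℝ) :=
      (ContinuousLinearMap.compL ℝ (EuclideanSpace ℝ (Fin n))
        (ℝ × EuclideanSpace ℝ (Fin n)) ℝ).flip inr with hcmp
    have hA' : HasDerivAt (fun s => (fderiv ℝ U (s, x)).comp inr)
        ((fderiv ℝ (fderiv ℝ U) (t, x) (1, 0)).comp inr) t :=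
      cmp.hasFDerivAt.comp_hasDerivAt t hA
    have hA'' : HasDerivAt (fun s => gradient (u s) x)
        ((InnerProductSpace.toDual ℝ (EuclideanSpace ℝ (Fin n))).symm
          ((fderiv ℝ (fderiv ℝ U) (t, x) (1, 0)).comp inr)) t := by
      have heq : (fun s => gradient (u s) x) =
          fun s => (InnerProductSpace.toDual ℝ (EuclideanSpace ℝ (Fin n))).symm
            ((fderiv ℝ U (s, x)).comp inr) := funext fun s => hgradUt s x
      rw [heq]
      exact ((InnerProductSpace.toDual ℝ
        (EuclideanSpace ℝ (Fin n))).symm.toContinuousLinearEquiv.toContinuousLinearMap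
        ).hasFDerivAt.comp_hasDerivAt t hA'
    convert hA'' using 1
    have hsym : IsSymmSndFDerivAt ℝ U (t, x) :=
      hu'.contDiffAt.isSymmSndFDerivAt (by norm_num)
    have hVfd : HasFDerivAt (fun y => V (t, y))
        ((ContinuousLinearMap.apply ℝ ℝ ((1:ℝ), (0:EuclideanSpace ℝ (Fin n)))).comp
          ((fderiv ℝ (fderiv ℝ U) (t, x)).comp inr)) x := by
      have h1 : HasFDerivAt (fun y => fderiv ℝ U (t, y))
          ((fderiv ℝ (fderiv ℝ U) (t, x)).comp inr) x :=
        (hfdU.differentiable one_ne_zero (t, x)).hasFDerivAt.comp x (hcurveX t x)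
      exact (ContinuousLinearMap.apply ℝ ℝ
        ((1:ℝ), (0:EuclideanSpace ℝ (Fin n)))).hasFDerivAt.comp x h1
    unfold gradient
    rw [hVfd.fderiv]
    congr 1
    ext h
    exact hsym (0, h) (1, 0)
  -- ## Partial derivative identities for Φ and Ψ
  have hcurveP : ∀ (y : EuclideanSpace ℝ (Fin n)) (p : EuclideanSpace ℝ (Fin n)),
      HasFDerivAt (fun q => (y, q) : EuclideanSpace ℝ (Fin n) →
          EuclideanSpace ℝ (Fin n) × EuclideanSpace ℝ (Fin n))
        (ContinuousLinearMap.inr ℝ (EuclideanSpace ℝ (Fin n)) (EuclideanSpace ℝ (Fin n))) p :=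
    fun y p => HasFDerivAt.prodMk (hasFDerivAt_const (𝕜 := ℝ) y p) (hasFDerivAt_id (𝕜 := ℝ) p)
  have hΦfds : ∀ (y p : EuclideanSpace ℝ (Fin n)),
      HasFDerivAt (fun q => Φ (y, q)) ((fderiv ℝ Φ (y, p)).comp
        (ContinuousLinearMap.inr ℝ (EuclideanSpace ℝ (Fin n)) (EuclideanSpace ℝ (Fin n)))) p :=
    fun y p => (hΦ.differentiable two_ne_zero (y, p)).hasFDerivAt.comp p (hcurveP y p)
  have hΦpartial : ∀ (y p q : EuclideanSpace ℝ (Fin n)),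
      inner (𝕜 := ℝ) (gradient (fun p' => Φ (y, p')) p) q = fderiv ℝ Φ (y, p) (0, q) := by
    intro y p q
    have h1 : gradient (fun p' => Φ (y, p')) p =
        (InnerProductSpace.toDual ℝ (EuclideanSpace ℝ (Fin n))).symm
          (fderiv ℝ (fun p' => Φ (y, p')) p) := rfl
    rw [h1, ← InnerProductSpace.toDual_apply_apply,
      LinearIsometryEquiv.apply_symm_apply, (hΦfds y p).fderiv]
    rfl
  have hΨfds : ∀ (y : EuclideanSpace ℝ (Fin n)) (z : ℝ),
      HasDerivAt (fun z' => Ψ (y, z')) (fderiv ℝ Ψ (y, z) (0, 1)) z := fun y z =>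
    (hΨ.differentiable one_ne_zero (y, z)).hasFDerivAt.comp_hasDerivAt z
      (HasDerivAt.prodMk (hasDerivAt_const z y) (hasDerivAt_id z))
  have hΨpartial : ∀ (y : EuclideanSpace ℝ (Fin n)) (z w : ℝ),
      fderiv ℝ Ψ (y, z) (0, w) = deriv (fun z' => Ψ (y, z')) z * w := by
    intro y z w
    rw [(hΨfds y z).deriv]
    have h0 : ((0 : EuclideanSpace ℝ (Fin n)), w)
        = w • ((0 : EuclideanSpace ℝ (Fin n)), (1:ℝ)) := by simp
    rw [h0, ContinuousLinearMap.map_smul]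
    simp [mul_comm]
  -- ## Main derivative computation
  have hMain : ∀ t, HasDerivAt
      (fun s => (1 / 2 : ℝ) * (∫ x, ρ x * (deriv (fun τ => u τ x) s) ^ 2) +
        b s * (∫ x, Φ (x, gradient (u s) x) + Ψ (x, u s x)))
      (-2 * a t * ((1 / 2 : ℝ) * (∫ x, ρ x * (deriv (fun τ => u τ x) t) ^ 2)) +
        deriv b t * (∫ x, Φ (x, gradient (u t) x) + Ψ (x, u t x))) t := by
    intro t
    -- shorthand
    set vt : EuclideanSpace ℝ (Fin n) → ℝ := fun x => V (t, x) with hvt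
    set wt : EuclideanSpace ℝ (Fin n) → ℝ :=
      fun x => fderiv ℝ (fderiv ℝ U) (t, x) (1, 0) (1, 0) with hwt
    set G : EuclideanSpace ℝ (Fin n) → EuclideanSpace ℝ (Fin n) :=
      fun y => gradient (fun p => Φ (y, p)) (gradient (u t) y) with hG
    set gV : EuclideanSpace ℝ (Fin n) → EuclideanSpace ℝ (Fin n) :=
      fun x => gradient (fun y => V (t, y)) x with hgV
    have hvt0 : ∀ x ∉ K, vt x = 0 := fun x hx =>
      (hvdef t x).symm.trans (hKsupp x hx t)
    -- smoothness of vt, gV, G, W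
    have hvtc1 : ContDiff ℝ 1 vt := hVc1.comp (contDiff_const.prodMk contDiff_id)
    have hgVeq : gV = fun x =>
        (InnerProductSpace.toDual ℝ (EuclideanSpace ℝ (Fin n))).symm (fderiv ℝ vt x) := rfl
    have hgVc : Continuous gV := by
      rw [hgVeq]
      exact (InnerProductSpace.toDual ℝ
        (EuclideanSpace ℝ (Fin n))).symm.continuous.comp (hvtc1.continuous_fderiv one_ne_zero)
    have hgV0 : ∀ x ∉ K, gV x = 0 := by
      intro x hx
      have hev : vt =ᶠ[nhds x] (fun _ => 0) := by
        filter_upwards [hK.isClosed.isOpen_compl.mem_nhds hx] with y hy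
        exact hvt0 y hy
      rw [hgVeq]
      simp only
      rw [hev.fderiv_eq, fderiv_fun_const]
      simp
    have hgradc : ContDiff ℝ 1 (fun y => gradient (u t) y) := by
      have heq : (fun y => gradient (u t) y) = fun y =>
          (InnerProductSpace.toDual ℝ (EuclideanSpace ℝ (Fin n))).symm
            ((fderiv ℝ U (t, y)).comp
              (ContinuousLinearMap.inr ℝ ℝ (EuclideanSpace ℝ (Fin n)))) :=
        funext fun y => hgradUt t y
      rw [heq]
      apply ((InnerProductSpace.toDual ℝ
        (EuclideanSpace ℝ (Fin n))).symm.toContinuousLinearEquiv.contDiff).comp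
      exact (hfdU.comp (contDiff_const.prodMk contDiff_id)).clm_comp contDiff_const
    have hGeq : G = fun y =>
        (InnerProductSpace.toDual ℝ (EuclideanSpace ℝ (Fin n))).symm
          ((fderiv ℝ Φ (y, gradient (u t) y)).comp
            (ContinuousLinearMap.inr ℝ (EuclideanSpace ℝ (Fin n))
              (EuclideanSpace ℝ (Fin n)))) := by
      funext y
      have h0 : G y = (InnerProductSpace.toDual ℝ (EuclideanSpace ℝ (Fin n))).symm
          (fderiv ℝ (fun p => Φ (y, p)) (gradient (u t) y)) := rfl
      rw [h0, (hΦfds y (gradient (u t) y)).fderiv]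
    have hGc1 : ContDiff ℝ 1 G := by
      rw [hGeq]
      apply ((InnerProductSpace.toDual ℝ
        (EuclideanSpace ℝ (Fin n))).symm.toContinuousLinearEquiv.contDiff).comp
      exact ((hΦ.fderiv_right (by norm_num)).comp
        (contDiff_id.prodMk hgradc)).clm_comp contDiff_const
    set W : EuclideanSpace ℝ (Fin n) → EuclideanSpace ℝ (Fin n) :=
      fun y => vt y • G y with hW
    have hWc1 : ContDiff ℝ 1 W := hvtc1.smul hGc1
    have hW0 : ∀ x ∉ K, W x = 0 := fun x hx => by
      rw [hW]; simp only [hvt0 x hx, zero_smul]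
    have hWcs : HasCompactSupport W := HasCompactSupport.intro hK hW0
    have hdivW0 : ∫ x, vecDiv W x = 0 := integral_vecDiv_eq_zero hn W hWc1 hWcs
    -- product rule for vecDiv
    have hvecDivW : ∀ x, vecDiv W x =
        (∑ i, (fderiv ℝ vt x (EuclideanSpace.single i 1)) * G x i) + vt x * vecDiv G x := by
      intro x
      have hfW : fderiv ℝ W x = vt x • fderiv ℝ G x + (fderiv ℝ vt x).smulRight (G x) :=
        (((hvtc1.differentiable one_ne_zero x).hasFDerivAt).smul
          ((hGc1.differentiable one_ne_zero x).hasFDerivAt)).fderiv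
      unfold vecDiv
      rw [hfW]
      have hterm : ∀ i : Fin n,
          ((vt x • fderiv ℝ G x + (fderiv ℝ vt x).smulRight (G x))
            (EuclideanSpace.single i 1)) i
          = vt x * (fderiv ℝ G x (EuclideanSpace.single i 1) i)
            + fderiv ℝ vt x (EuclideanSpace.single i 1) * G x i := by
        intro i
        simp [ContinuousLinearMap.add_apply, ContinuousLinearMap.smul_apply,
          ContinuousLinearMap.smulRight_apply, PiLp.add_apply, PiLp.smul_apply,
          smul_eq_mul]
      rw [Finset.sum_congr rfl (fun i _ => hterm i), Finset.sum_add_distrib,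
        Finset.mul_sum]
      ring
    -- inner products as coordinate sums
    have hinner1 : ∀ x, inner (𝕜 := ℝ) (G x) (gV x) =
        ∑ i, (fderiv ℝ vt x (EuclideanSpace.single i 1)) * G x i := by
      intro x
      have h2 : fderiv ℝ vt x
          = (InnerProductSpace.toDual ℝ (EuclideanSpace ℝ (Fin n))) (gV x) :=
        ((InnerProductSpace.toDual ℝ
          (EuclideanSpace ℝ (Fin n))).apply_symm_apply (fderiv ℝ vt x)).symm
      have h1 : ∀ i : Fin n, fderiv ℝ vt x (EuclideanSpace.single i 1) = gV x i := by
        intro i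
        rw [h2, InnerProductSpace.toDual_apply_apply, PiLp.inner_apply]
        simp [EuclideanSpace.single_apply]
      rw [PiLp.inner_apply]
      apply Finset.sum_congr rfl
      intro i _
      rw [h1 i]
      simp [mul_comm]
    -- time derivative of kinetic integrand
    have hDkin : ∀ x, deriv (fun s => ρ x * (deriv (fun τ => u τ x) s) ^ 2) t
        = ρ x * (2 * vt x ^ 1 * wt x) := by
      intro x
      have hfun : (fun s => ρ x * (deriv (fun τ => u τ x) s) ^ 2)
          = fun s => ρ x * (V (s, x)) ^ 2 := funext fun s => by rw [hvdef]
      rw [hfun]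
      exact (((hw t x).pow 2).const_mul (ρ x)).deriv
    -- time derivative of potential integrand
    have hDpot : ∀ x, deriv (fun s => Φ (x, gradient (u s) x) + Ψ (x, u s x)) t
        = inner (𝕜 := ℝ) (G x) (gV x) + deriv (fun z => Ψ (x, z)) (u t x) * vt x := by
      intro x
      have h1 : HasDerivAt (fun s => Φ (x, gradient (u s) x))
          (fderiv ℝ Φ (x, gradient (u t) x) (0, gV x)) t :=
        (hΦ.differentiable two_ne_zero _).hasFDerivAt.comp_hasDerivAt t
          ((hasDerivAt_const t x).prodMk (hgradswap t x))
      have h2 : HasDerivAt (fun s => Ψ (x, u s x))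
          (fderiv ℝ Ψ (x, u t x) (0, V (t, x))) t :=
        (hΨ.differentiable one_ne_zero _).hasFDerivAt.comp_hasDerivAt t
          ((hasDerivAt_const t x).prodMk (hv t x))
      rw [(h1.fun_add h2).deriv, ← hΦpartial x (gradient (u t) x) (gV x), hΨpartial x (u t x)]
    -- rewritten PDE
    have hPDE' : ∀ x, ρ x * (wt x + a t * vt x) =
        -(b t) * (deriv (fun z => Ψ (x, z)) (u t x) - vecDiv G x) := by
      intro x
      have h1 := hPDE t x
      have h2 : deriv (fun s => deriv (fun τ => u τ x) s) t = wt x := by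
        have hfun : (fun s => deriv (fun τ => u τ x) s) = fun s => V (s, x) :=
          funext fun s => hvdef s x
        rw [hfun]
        exact (hw t x).deriv
      rw [h2, hvdef] at h1
      exact h1
    -- continuity and integrability
    have hvtc : Continuous vt := hvtc1.continuous
    have hwtc : Continuous wt := by
      have h1 : Continuous (fun x => fderiv ℝ (fderiv ℝ U) (t, x)) :=
        (hfdU.continuous_fderiv one_ne_zero).comp (continuous_const.prodMk continuous_id)
      exact ((ContinuousLinearMap.apply ℝ ℝ
        ((1:ℝ), (0:EuclideanSpace ℝ (Fin n)))).continuous.comp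
        (((ContinuousLinearMap.apply ℝ (ℝ × EuclideanSpace ℝ (Fin n) →L[ℝ] ℝ)
          ((1:ℝ), (0:EuclideanSpace ℝ (Fin n)))).continuous.comp h1)))
    have hutc : Continuous (u t) := by
      have : Continuous (fun x => U (t, x)) :=
        hu'.continuous.comp (continuous_const.prodMk continuous_id)
      exact this
    have hΨzc : Continuous (fun x => deriv (fun z => Ψ (x, z)) (u t x)) := by
      have heq : (fun x => deriv (fun z => Ψ (x, z)) (u t x))
          = fun x => fderiv ℝ Ψ (x, u t x) (0, 1) :=
        funext fun x => (hΨfds x (u t x)).deriv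
      rw [heq]
      exact (ContinuousLinearMap.apply ℝ ℝ
        ((0 : EuclideanSpace ℝ (Fin n)), (1:ℝ))).continuous.comp
        ((hΨ.continuous_fderiv one_ne_zero).comp (continuous_id.prodMk hutc))
    have hintDkin : Integrable
        (fun x => deriv (fun s => ρ x * (deriv (fun τ => u τ x) s) ^ 2) t) := by
      have heq : (fun x => deriv (fun s => ρ x * (deriv (fun τ => u τ x) s) ^ 2) t)
          = fun x => ρ x * (2 * vt x ^ 1 * wt x) := funext hDkin
      rw [heq]
      apply Continuous.integrable_of_hasCompactSupport
      · exact hρ.mul ((continuous_const.mul (hvtc.pow 1)).mul hwtc)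
      · apply HasCompactSupport.intro hK
        intro x hx
        simp [hvt0 x hx]
    have hintDpot : Integrable
        (fun x => deriv (fun s => Φ (x, gradient (u s) x) + Ψ (x, u s x)) t) := by
      have heq : (fun x => deriv (fun s => Φ (x, gradient (u s) x) + Ψ (x, u s x)) t)
          = fun x => inner (𝕜 := ℝ) (G x) (gV x)
            + deriv (fun z => Ψ (x, z)) (u t x) * vt x := funext hDpot
      rw [heq]
      apply Continuous.integrable_of_hasCompactSupport
      · exact (hGc1.continuous.inner hgVc).add (hΨzc.mul hvtc)
      · apply HasCompactSupport.intro hK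
        intro x hx
        simp [hvt0 x hx, hgV0 x hx]
    have hintdivW : Integrable (vecDiv W) := by
      apply Continuous.integrable_of_hasCompactSupport
      · apply continuous_finset_sum
        intro i _
        exact ((continuous_apply i).comp
          (by fun_prop : Continuous fun v : EuclideanSpace ℝ (Fin n) => v.ofLp)).comp
          ((hWc1.continuous_fderiv one_ne_zero).clm_apply continuous_const)
      · apply HasCompactSupport.intro hK
        intro x hx
        have hev : W =ᶠ[nhds x] (fun _ => 0) := by
          filter_upwards [hK.isClosed.isOpen_compl.mem_nhds hx] with y hy
          exact hW0 y hy
        unfold vecDiv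
        rw [hev.fderiv_eq, fderiv_fun_const]
        simp
    -- the key pointwise identity
    have hkey : ∀ x, (1/2 : ℝ) * deriv (fun s => ρ x * (deriv (fun τ => u τ x) s) ^ 2) t
        + b t * deriv (fun s => Φ (x, gradient (u s) x) + Ψ (x, u s x)) t
        = -(a t) * (ρ x * (deriv (fun τ => u τ x) t) ^ 2) + b t * vecDiv W x := by
      intro x
      rw [hDkin, hDpot, hvecDivW, ← hinner1, hvdef]
      have h1 := hPDE' x
      have hvtx : vt x = fderiv ℝ U (t, x) (1, 0) := rfl
      rw [← hvtx]
      linear_combination (vt x) * h1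
    -- integral of the key identity
    have hcomb : (1/2 : ℝ) * (∫ x, deriv (fun s => ρ x * (deriv (fun τ => u τ x) s) ^ 2) t)
        + b t * (∫ x, deriv (fun s => Φ (x, gradient (u s) x) + Ψ (x, u s x)) t)
        = -(a t) * (∫ x, ρ x * (deriv (fun τ => u τ x) t) ^ 2) := by
      rw [← integral_const_mul, ← integral_const_mul,
        ← integral_add (hintDkin.const_mul _) (hintDpot.const_mul _)]
      rw [integral_congr_ae (Filter.Eventually.of_forall hkey)]
      rw [integral_add ((hintK t).const_mul _) (hintdivW.const_mul _),
        integral_const_mul, integral_const_mul, hdivW0]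
      ring
    -- assemble
    have h1 := (hDUISK t).const_mul (1/2 : ℝ)
    have h2 := ((hb.differentiable one_ne_zero t).hasDerivAt.fun_mul (hDUISE t))
    have h3 := h1.fun_add h2
    refine h3.congr_deriv ?_
    linarith [hcomb]
  refine ⟨hMain, fun hb' hE => ?_⟩
  apply antitone_of_deriv_nonpos
  · exact fun t => (hMain t).differentiableAt
  · intro t
    rw [(hMain t).deriv]
    have hF : 0 ≤ ∫ x, ρ x * (deriv (fun τ => u τ x) t) ^ 2 :=
      integral_nonneg fun x => mul_nonneg (hρpos x).le (sq_nonneg _)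
    have h2 := mul_nonpos_of_nonpos_of_nonneg (hb' t) (hE t)
    nlinarith [mul_nonneg (hanonneg t) hF]
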